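/- If N = 2 or N ≥ 4, the sequence (g_N(δ))_{δ ∈ ℕ, δ ≥ 2} defined by g_N(δ) := ((N·δ + 1)·(δ - 1)^(N-1) + (-1)^N·(δ + 1)) / (δ^2·(δ - 1)^(N-1)) is strictly decreasing, i.e. g_N(δ + 1) < g_N(δ) for every integer δ ≥ 2. -/
import Mathlib


/-- The sequence `g_N(δ)` from the paper, as a rational number, for `N ≥ 1` and `δ ≥ 2`. -/
def g (N δ : ℕ) : ℚ :=
  (((N : ℚ) * δ + 1) * ((δ : ℚ) - 1) ^ (N - 1) + (-1) ^ N * ((δ : ℚ) + 1)) /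
    ((δ : ℚ) ^ 2 * ((δ : ℚ) - 1) ^ (N - 1))

/-- If `N = 2` or `N ≥ 4`, the sequence `(g_N(δ))_{δ ≥ 2}` is strictly decreasing. -/
theorem g_strictAnti (N : ℕ) (hN : N = 2 ∨ 4 ≤ N) :
    ∀ δ : ℕ, 2 ≤ δ → g N (δ + 1) < g N δ := by
  intro δ hδ
  have hq : (2 : ℚ) ≤ (δ : ℚ) := by exact_mod_cast hδ
  unfold g
  push_cast
  set q : ℚ := (δ : ℚ) with hqd
  have hsimp : q + 1 - 1 = q := by ring
  rw [hsimp]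
  set m := N - 1 with hm
  have hq1 : (1:ℚ) ≤ q - 1 := by linarith
  have hx : (1:ℚ) ≤ (q-1)^m := one_le_pow₀ hq1
  have hy : (1:ℚ) ≤ q^m := one_le_pow₀ (by linarith)
  have hxy : (q-1)^m ≤ q^m := by
    apply pow_le_pow_left₀ (by linarith) (by linarith)
  have hd1 : (0:ℚ) < (q+1)^2 * q^m := by positivity
  have hd2 : (0:ℚ) < q^2 * (q-1)^m := by
    apply mul_pos (by positivity)
    linarith
  rw [div_lt_div_iff₀ hd1 hd2]
  have hN2 : (2:ℚ) ≤ (N:ℚ) := by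
    rcases hN with h | h
    · rw [h]; norm_num
    · exact_mod_cast le_trans (by norm_num) h
  rcases Nat.even_or_odd N with he | ho
  · rw [he.neg_one_pow]
    nlinarith [mul_le_mul_of_nonneg_left hxy (by positivity : (0:ℚ) ≤ (q+2)*q^2),
      mul_pos (mul_pos (lt_of_lt_of_le one_pos hx) (lt_of_lt_of_le one_pos hy))
        (by nlinarith : (0:ℚ) < (N:ℚ)*q^2 + (N:ℚ)*q + 2*q + 1),
      mul_le_mul_of_nonneg_right (by nlinarith : (q+2)*q^2 ≤ (q+1)^3)
        (le_trans zero_le_one hy)]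
  · rw [ho.neg_one_pow]
    have hN5 : 5 ≤ N := by
      rcases hN with h | h
      · exfalso; rw [h] at ho; exact (Nat.not_odd_iff_even.2 (by norm_num)) ho
      · rcases ho with ⟨k, hk⟩; omega
    have hN5' : (5:ℚ) ≤ (N:ℚ) := by exact_mod_cast hN5
    have hm4 : 4 ≤ m := by omega
    have hx4 : (q-1)^4 ≤ (q-1)^m := pow_le_pow_right₀ hq1 hm4
    have ht : (0:ℚ) ≤ q - 2 := by linarith
    have key5 : (q+1)^3 < (q-1)^4 * (5*q^2 + 7*q + 1) := by
      nlinarith [pow_nonneg ht 2, pow_nonneg ht 3, pow_nonneg ht 4, pow_nonneg ht 5,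
        pow_nonneg ht 6]
    have key : (q+1)^3 < (q-1)^4 * ((N:ℚ)*q^2 + (N:ℚ)*q + 2*q + 1) := by
      have h0 : (0:ℚ) ≤ (q-1)^4 * (((N:ℚ) - 5) * (q^2 + q)) := by
        apply mul_nonneg (by positivity)
        apply mul_nonneg (by linarith) (by nlinarith)
      nlinarith [key5]
    have key2 : (q+1)^3 < (q-1)^m * ((N:ℚ)*q^2 + (N:ℚ)*q + 2*q + 1) := by
      calc (q+1)^3 < (q-1)^4 * ((N:ℚ)*q^2 + (N:ℚ)*q + 2*q + 1) := key
        _ ≤ (q-1)^m * ((N:ℚ)*q^2 + (N:ℚ)*q + 2*q + 1) := by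
            apply mul_le_mul_of_nonneg_right hx4 (by nlinarith)
    nlinarith [mul_lt_mul_of_pos_right key2 (lt_of_lt_of_le one_pos hy),
      mul_pos (mul_pos (by positivity : (0:ℚ) < (q+2)*q^2) (lt_of_lt_of_le one_pos hx))
        (lt_of_lt_of_le one_pos hy),
      mul_le_mul_of_nonneg_right key2.le (le_of_lt (lt_of_lt_of_le one_pos hy))]
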